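/- For natural numbers n, m ≥ 0, the integral of sin(x)^(2n) * cos(2x)^(m - 1/2) / cos(x)^(2n+2m+1) over x from 0 to π/4 equals (π / 2^(2n+2m+1)) * binomial(2n, n) * binomial(2m, m) / binomial(n+m, n). -/

import Mathlib

open Real
open MeasureTheory

lemma beta_real (a b : ℝ) (ha : 0 < a) (hb : 0 < b) :
    ∫ x in (0:ℝ)..1, x ^ (a-1) * (1-x) ^ (b-1) =
      Real.Gamma a * Real.Gamma b / Real.Gamma (a+b) := by
  have key := Complex.Gamma_mul_Gamma_eq_betaIntegral (s := (a:ℂ)) (t := (b:ℂ))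
    (by simpa using ha) (by simpa using hb)
  have hβ : Complex.betaIntegral a b = ((∫ x in (0:ℝ)..1, x ^ (a-1) * (1-x) ^ (b-1) : ℝ) : ℂ) := by
    rw [Complex.betaIntegral, ← intervalIntegral.integral_ofReal]
    refine intervalIntegral.integral_congr fun x hx => ?_
    rw [Set.uIcc_of_le (by norm_num)] at hx
    push_cast
    rw [Complex.ofReal_cpow hx.1, Complex.ofReal_cpow (by linarith [hx.2] : (0:ℝ) ≤ 1 - x)]
    push_cast
    ring
  have hne : Complex.Gamma ((a:ℂ) + b) ≠ 0 := by
    apply Complex.Gamma_ne_zero_of_re_pos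
    simp [ha, hb]
    positivity
  rw [hβ] at key
  have : ((Real.Gamma a * Real.Gamma b : ℝ) : ℂ) =
      ((Real.Gamma (a+b) : ℝ) : ℂ) * ((∫ x in (0:ℝ)..1, x ^ (a-1) * (1-x) ^ (b-1) : ℝ) : ℂ) := by
    push_cast [← Complex.Gamma_ofReal]
    simpa using key
  have h2 : Real.Gamma a * Real.Gamma b =
      Real.Gamma (a+b) * ∫ x in (0:ℝ)..1, x ^ (a-1) * (1-x) ^ (b-1) := by
    exact_mod_cast this
  have hG : Real.Gamma (a+b) ≠ 0 := (Real.Gamma_pos_of_pos (by linarith)).ne'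
  rw [eq_div_iff hG]
  linarith [h2]

lemma gamma_half (n : ℕ) :
    Real.Gamma ((n : ℝ) + 1/2) = Real.sqrt π * (2*n).factorial / (4^n * n.factorial) := by
  induction n with
  | zero => simpa using Real.Gamma_one_half_eq
  | succ k ih =>
      have h : ((k+1 : ℕ) : ℝ) + 1/2 = ((k:ℝ) + 1/2) + 1 := by push_cast; ring
      rw [h, Real.Gamma_add_one (by positivity), ih]
      have h2 : (2*(k+1)) = (2*k+1) + 1 := by ring
      rw [h2]
      simp [Nat.factorial_succ]
      push_cast
      field_simp
      ring

lemma ptwise (n m : ℕ) {x : ℝ} (hx : x ∈ Set.Ioo 0 (π/4)) :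
    Real.sin x ^ (2 * n) * Real.cos (2 * x) ^ ((m : ℝ) - 1/2) *
      Real.cos x ^ (-(2 * (n : ℝ) + 2 * (m : ℝ) + 1)) =
    |2 * Real.tan x * (1 / Real.cos x ^ 2)| *
      (2⁻¹ * (Real.tan x ^ 2) ^ ((n:ℝ) - 1/2) * (1 - Real.tan x ^ 2) ^ ((m:ℝ) - 1/2)) := by
  obtain ⟨hx0, hx1⟩ := hx
  have hpi := pi_pos
  have hs : 0 < Real.sin x := sin_pos_of_pos_of_lt_pi hx0 (by linarith)
  have hc : 0 < Real.cos x := cos_pos_of_mem_Ioo ⟨by linarith, by linarith⟩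
  have hc2 : 0 < Real.cos (2*x) := cos_pos_of_mem_Ioo ⟨by linarith, by linarith⟩
  have h2x : Real.cos (2*x) = Real.cos x^2 - Real.sin x^2 := Real.cos_two_mul' x
  have htan : Real.tan x = Real.sin x / Real.cos x := Real.tan_eq_sin_div_cos x
  have ht : 0 < Real.tan x := by rw [htan]; positivity
  have hA : 0 < Real.cos x^2 - Real.sin x^2 := by rw [← h2x]; exact hc2
  have h1t : 1 - Real.tan x^2 = (Real.cos x^2 - Real.sin x^2)/Real.cos x^2 := by
    rw [htan]; field_simp
  rw [abs_of_pos (by positivity), h2x, h1t, htan]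
  have hdiv : 0 < Real.sin x / Real.cos x := by positivity
  have hdiv2 : 0 < (Real.sin x / Real.cos x)^2 := by positivity
  have hq : 0 < (Real.cos x^2 - Real.sin x^2)/Real.cos x^2 := by positivity
  refine Real.log_injOn_pos (Set.mem_Ioi.2 (by positivity)) (Set.mem_Ioi.2 (by positivity)) ?_
  rw [Real.log_mul (by positivity) (by positivity), Real.log_mul (by positivity) (by positivity),
    Real.log_mul (by positivity) (by positivity), Real.log_mul (by positivity) (by positivity),
    Real.log_mul (by positivity) (by positivity), Real.log_mul (by positivity) (by positivity),
    Real.log_mul (by positivity) (by positivity),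
    Real.log_rpow hA, Real.log_rpow hc, Real.log_rpow hdiv2, Real.log_rpow hq,
    Real.log_pow, Real.log_pow, Real.log_div hs.ne' hc.ne',
    Real.log_div hA.ne' (pow_ne_zero 2 hc.ne'),
    Real.log_pow, one_div, one_div, Real.log_inv, Real.log_inv, Real.log_pow]
  push_cast
  ring

lemma himg : (fun x => Real.tan x ^ 2) '' Set.Ioo 0 (π/4) = Set.Ioo (0:ℝ) 1 := by
  have hpi := pi_pos
  ext u
  constructor
  · rintro ⟨x, ⟨hx0, hx1⟩, rfl⟩
    have hs : 0 < Real.sin x := sin_pos_of_pos_of_lt_pi hx0 (by linarith)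
    have hc : 0 < Real.cos x := cos_pos_of_mem_Ioo ⟨by linarith, by linarith⟩
    have ht : 0 < Real.tan x := by rw [Real.tan_eq_sin_div_cos]; positivity
    have h1 : Real.tan x < 1 := by
      rw [← Real.tan_pi_div_four]
      exact Real.tan_lt_tan_of_nonneg_of_lt_pi_div_two hx0.le (by linarith) hx1
    refine ⟨by positivity, ?_⟩
    simp only
    nlinarith
  · rintro ⟨hu0, hu1⟩
    refine ⟨Real.arctan (Real.sqrt u), ⟨?_, ?_⟩, ?_⟩
    · rw [← Real.arctan_zero]
      exact Real.arctan_strictMono (by positivity)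
    · rw [← Real.arctan_one]
      exact Real.arctan_strictMono ((Real.sqrt_lt' one_pos).2 (by nlinarith))
    · simp [Real.tan_arctan, Real.sq_sqrt hu0.le]

lemma hinj : Set.InjOn (fun x => Real.tan x ^ 2) (Set.Ioo 0 (π/4)) := by
  have hpi := pi_pos
  intro x hx y hy h
  have k : ∀ z ∈ Set.Ioo 0 (π/4), 0 < Real.tan z := by
    rintro z ⟨hz0, hz1⟩
    have hs : 0 < Real.sin z := sin_pos_of_pos_of_lt_pi hz0 (by linarith)
    have hc : 0 < Real.cos z := cos_pos_of_mem_Ioo ⟨by linarith, by linarith⟩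
    rw [Real.tan_eq_sin_div_cos]; positivity
  simp only at h
  have h2 : Real.tan x = Real.tan y := by
    have := k x hx; have := k y hy
    nlinarith [sq_nonneg (Real.tan x - Real.tan y), sq_nonneg (Real.tan x + Real.tan y)]
  exact Real.injOn_tan ⟨by linarith [hx.1], by linarith [hx.2]⟩
    ⟨by linarith [hy.1], by linarith [hy.2]⟩ h2

lemma hderiv : ∀ x ∈ Set.Ioo 0 (π/4),
    HasDerivWithinAt (fun x => Real.tan x ^ 2) (2 * Real.tan x * (1 / Real.cos x ^ 2))
      (Set.Ioo 0 (π/4)) x := by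
  have hpi := pi_pos
  rintro x ⟨hx0, hx1⟩
  have hc : Real.cos x ≠ 0 :=
    (cos_pos_of_mem_Ioo ⟨by linarith, by linarith⟩).ne'
  have := ((Real.hasDerivAt_tan hc).fun_pow 2).hasDerivWithinAt
    (s := Set.Ioo 0 (π/4))
  exact this.congr_deriv (by ring)

theorem subst_step (n m : ℕ) :
    ∫ x in (0:ℝ)..(π/4), (Real.sin x) ^ (2 * n) * (Real.cos (2 * x)) ^ ((m : ℝ) - 1/2) *
        (Real.cos x) ^ (-(2 * (n : ℝ) + 2 * (m : ℝ) + 1)) =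
      ∫ u in (0:ℝ)..1, 2⁻¹ * u ^ ((n:ℝ) - 1/2) * (1 - u) ^ ((m:ℝ) - 1/2) := by
  have hpi := pi_pos
  rw [intervalIntegral.integral_of_le (by positivity),
    intervalIntegral.integral_of_le (by norm_num : (0:ℝ) ≤ 1),
    integral_Ioc_eq_integral_Ioo, integral_Ioc_eq_integral_Ioo]
  rw [← himg, integral_image_eq_integral_abs_deriv_smul measurableSet_Ioo hderiv hinj]
  refine setIntegral_congr_fun measurableSet_Ioo fun x hx => ?_
  rw [ptwise n m hx]
  simp [smul_eq_mul]

theorem stmt18 (n m : ℕ) :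
    ∫ x in (0:ℝ)..(π/4), (Real.sin x) ^ (2 * n) * (Real.cos (2 * x)) ^ ((m : ℝ) - 1/2) *
        (Real.cos x) ^ (-(2 * (n : ℝ) + 2 * (m : ℝ) + 1)) =
      π / 2 ^ (2 * n + 2 * m + 1) * (Nat.choose (2 * n) n : ℝ) * (Nat.choose (2 * m) m : ℝ) /
        (Nat.choose (n + m) n : ℝ) := by
  rw [subst_step]
  have h1 : ∫ u in (0:ℝ)..1, 2⁻¹ * u ^ ((n:ℝ) - 1/2) * (1 - u) ^ ((m:ℝ) - 1/2)
      = 2⁻¹ * ∫ u in (0:ℝ)..1, u ^ (((n:ℝ)+1/2) - 1) * (1 - u) ^ (((m:ℝ)+1/2) - 1) := by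
    rw [← intervalIntegral.integral_const_mul]
    refine intervalIntegral.integral_congr fun u _ => ?_
    norm_num
    ring
  rw [h1, beta_real _ _ (by positivity) (by positivity)]
  have h2 : ((n:ℝ)+1/2) + ((m:ℝ)+1/2) = ((n+m : ℕ):ℝ) + 1 := by push_cast; ring
  rw [h2, Real.Gamma_nat_eq_factorial, gamma_half, gamma_half]
  have e1 : (2*n).choose n * n.factorial * n.factorial = (2*n).factorial := by
    have h := Nat.choose_mul_factorial_mul_factorial (by omega : n ≤ 2*n)
    have h' : 2*n - n = n := by omega
    rwa [h'] at h
  have e2 : (2*m).choose m * m.factorial * m.factorial = (2*m).factorial := by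
    have h := Nat.choose_mul_factorial_mul_factorial (by omega : m ≤ 2*m)
    have h' : 2*m - m = m := by omega
    rwa [h'] at h
  have e3 : (n+m).choose n * n.factorial * m.factorial = (n+m).factorial := by
    have h := Nat.choose_mul_factorial_mul_factorial (by omega : n ≤ n+m)
    have h' : n+m - n = m := by omega
    rwa [h'] at h
  have hC1 : ((2*n).choose n : ℝ) * n.factorial * n.factorial = (2*n).factorial := by
    exact_mod_cast congrArg (Nat.cast : ℕ → ℝ) e1
  have hC2 : ((2*m).choose m : ℝ) * m.factorial * m.factorial = (2*m).factorial := by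
    exact_mod_cast congrArg (Nat.cast : ℕ → ℝ) e2
  have hC3 : ((n+m).choose n : ℝ) * n.factorial * m.factorial = (n+m).factorial := by
    exact_mod_cast congrArg (Nat.cast : ℕ → ℝ) e3
  rw [← hC1, ← hC2, ← hC3]
  have hp : (2:ℝ)^(2*n+2*m+1) = 2 * 4^n * 4^m := by
    rw [pow_add, pow_add, pow_mul, pow_mul]; norm_num; ring
  rw [hp]
  have hnf : (n.factorial : ℝ) ≠ 0 := Nat.cast_ne_zero.2 n.factorial_ne_zero
  have hmf : (m.factorial : ℝ) ≠ 0 := Nat.cast_ne_zero.2 m.factorial_ne_zero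
  have hcn : (((n+m).choose n : ℕ) : ℝ) ≠ 0 :=
    Nat.cast_ne_zero.2 (Nat.choose_pos (by omega : n ≤ n+m)).ne'
  have h4n : ((4:ℝ))^n ≠ 0 := by positivity
  have h4m : ((4:ℝ))^m ≠ 0 := by positivity
  have hss : Real.sqrt π * Real.sqrt π = π := Real.mul_self_sqrt pi_pos.le
  generalize hq : Real.sqrt π = p at hss ⊢
  rw [← hss]
  field_simp
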